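/- If G is a non-apex simple graph and v is a vertex of G of degree 2, then the graph obtained from G by contracting one of the two edges incident to v (deleting any resulting loops and parallel edges) is also non-apex. -/

import Mathlib

open SimpleGraph

/-- `H` is a minor of `G`: there is an assignment of (some) vertices of `G` to
branch sets, one nonempty connected branch set for each vertex of `H`, such that
every edge of `H` is realized by an edge of `G` between the corresponding branch sets. -/
def IsMinor {V W : Type} (H : SimpleGraph W) (G : SimpleGraph V) : Prop :=
  ∃ f : V → Option W,
    (∀ w : W, ∃ v, f v = some w) ∧
    (∀ w : W, (G.induce {v | f v = some w}).Connected) ∧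
    (∀ w₁ w₂ : W, H.Adj w₁ w₂ →
      ∃ v₁ v₂, f v₁ = some w₁ ∧ f v₂ = some w₂ ∧ G.Adj v₁ v₂)

/-- Planarity via Wagner's theorem: no `K₅` minor and no `K₃,₃` minor. -/
def IsPlanar {V : Type} (G : SimpleGraph V) : Prop :=
  ¬ IsMinor (completeGraph (Fin 5)) G ∧
    ¬ IsMinor (completeBipartiteGraph (Fin 3) (Fin 3)) G

/-- A graph is apex if deleting some vertex leaves a planar graph. -/
def IsApex {V : Type} (G : SimpleGraph V) : Prop :=
  ∃ v : V, IsPlanar (G.induce {u | u ≠ v})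

/-- Minor minimal non-apex: not apex, but every proper minor is apex. -/
def IsMMNA {V : Type} (G : SimpleGraph V) : Prop :=
  ¬ IsApex G ∧
    ∀ (W : Type) (H : SimpleGraph W), IsMinor H G → ¬ IsMinor G H → IsApex H

/-- The degree of a vertex, as the cardinality of its neighbor set. -/
noncomputable def vdeg {V : Type} (G : SimpleGraph V) (v : V) : ℕ :=
  (G.neighborSet v).ncard

/-- Edge list of the icosahedral graph on 12 vertices. -/
def icList : List (Fin 12 × Fin 12) :=
  [(0,1),(0,2),(0,3),(0,4),(0,5),
   (1,2),(2,3),(3,4),(4,5),(5,1),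
   (11,6),(11,7),(11,8),(11,9),(11,10),
   (6,7),(7,8),(8,9),(9,10),(10,6),
   (1,6),(1,7),(2,7),(2,8),(3,8),(3,9),(4,9),(4,10),(5,10),(5,6)]

/-- The icosahedral graph `Ic`. -/
def Ic : SimpleGraph (Fin 12) := SimpleGraph.fromRel (fun a b => (a, b) ∈ icList)

/-- The join `K₁ ∗ Ic`: a cone over the icosahedral graph. -/
def ConeIc : SimpleGraph (Unit ⊕ Fin 12) :=
  SimpleGraph.fromRel (fun a b =>
    a = Sum.inl () ∨ b = Sum.inl () ∨ ∃ x y, a = Sum.inr x ∧ b = Sum.inr y ∧ Ic.Adj x y)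

/-- Contraction of the edge `uv` onto the vertex `u`: the vertex `v` is removed and `u`
becomes adjacent to all former neighbors of `v` (loops and multiple edges are discarded). -/
def contractEdge {V : Type} (G : SimpleGraph V) (u v : V) : SimpleGraph {x : V // x ≠ v} :=
  SimpleGraph.fromRel (fun a b =>
    G.Adj a.1 b.1 ∨ (a.1 = u ∧ G.Adj v b.1) ∨ (b.1 = u ∧ G.Adj a.1 v))

lemma connected_transfer {α β : Type*} {A : SimpleGraph α} {B : SimpleGraph β} (φ : α → β)
    (hsurj : Function.Surjective φ)
    (hadj : ∀ x y, A.Adj x y → B.Adj (φ x) (φ y) ∨ φ x = φ y)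
    (hA : A.Connected) : B.Connected := by
  have hne : Nonempty β := Nonempty.map φ hA.nonempty
  rw [connected_iff]
  refine ⟨fun b1 b2 => ?_, hne⟩
  obtain ⟨x1, rfl⟩ := hsurj b1
  obtain ⟨x2, rfl⟩ := hsurj b2
  obtain ⟨p⟩ := hA.preconnected x1 x2
  induction p with
  | nil => exact Reachable.refl _
  | cons h p ih =>
    rcases hadj _ _ h with h' | h'
    · exact (h'.reachable).trans ih
    · rw [h']; exact ih

lemma exists_adj_of_connected {γ : Type*} {C : SimpleGraph γ} (h : C.Connected) {x y : γ}
    (hxy : x ≠ y) : ∃ z, C.Adj x z := by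
  obtain ⟨p⟩ := h.preconnected x y
  cases p with
  | nil => exact absurd rfl hxy
  | cons h' _ => exact ⟨_, h'⟩

def bLift {V : Type} {v : V} (a : {x : V // x ≠ v}) (x : {x : V | x ≠ a.1}) (hx : x.1 ≠ v) :
    {y : {x : V // x ≠ v} | y ≠ a} :=
  ⟨⟨x.1, hx⟩, fun e => x.2 (congrArg Subtype.val e)⟩

def bProj {V : Type} {v : V} (a : {x : V // x ≠ v}) (y : {y : {x : V // x ≠ v} | y ≠ a}) :
    {x : V | x ≠ a.1} :=
  ⟨y.1.1, fun e => y.2 (Subtype.ext e)⟩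

lemma key {V W : Type} (K : SimpleGraph W)
    (hdeg : ∀ w : W, ∃ w₁ w₂ w₃ : W, w₁ ≠ w₂ ∧ w₁ ≠ w₃ ∧ w₂ ≠ w₃ ∧
      K.Adj w w₁ ∧ K.Adj w w₂ ∧ K.Adj w w₃)
    (G : SimpleGraph V) (u v t : V) (hut : u ≠ t)
    (hvu : G.Adj v u) (hvt : G.Adj v t)
    (hnbr : ∀ x, G.Adj v x → x = u ∨ x = t)
    (a : {x : V // x ≠ v})
    (hmin : IsMinor K (G.induce {x : V | x ≠ a.1})) :
    IsMinor K ((contractEdge G u v).induce {y : {x : V // x ≠ v} | y ≠ a}) := by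
  classical
  obtain ⟨f, hsurj, hconn, hadj⟩ := hmin
  have hva : v ∈ {x : V | x ≠ a.1} := Ne.symm a.2
  let v' : {x : V | x ≠ a.1} := ⟨v, hva⟩
  let g : {y : {x : V // x ≠ v} | y ≠ a} → Option W := fun y => f (bProj a y)
  have hglift : ∀ (x : {x : V | x ≠ a.1}) (hx : x.1 ≠ v), g (bLift a x hx) = f x :=
    fun x hx => congrArg f (Subtype.ext rfl)
  -- adjacency transfer to the contracted graph
  have hlift_adj : ∀ (x y : {x : V | x ≠ a.1}) (hx : x.1 ≠ v) (hy : y.1 ≠ v),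
      (G.Adj x.1 y.1 ∨ ((x.1 = u ∨ x.1 = t) ∧ (y.1 = u ∨ y.1 = t) ∧ x.1 ≠ y.1)) →
      ((contractEdge G u v).induce {y : {x : V // x ≠ v} | y ≠ a}).Adj
        (bLift a x hx) (bLift a y hy) := by
    intro x y hx hy h
    show (contractEdge G u v).Adj ⟨x.1, hx⟩ ⟨y.1, hy⟩
    rw [contractEdge, fromRel_adj]
    have hne : x.1 ≠ y.1 := by
      rcases h with h | ⟨_, _, h⟩
      · exact h.ne
      · exact h
    refine ⟨fun e => hne (Subtype.mk_eq_mk.mp e), ?_⟩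
    rcases h with h | ⟨hxu | hxt, hyu | hyt, hne'⟩
    · exact Or.inl (Or.inl h)
    · exact absurd (hxu.trans hyu.symm) hne'
    · exact Or.inl (Or.inr (Or.inl ⟨hxu, by rw [hyt]; exact hvt⟩))
    · exact Or.inl (Or.inr (Or.inr ⟨hyu, by rw [hxt]; exact hvt.symm⟩))
    · exact absurd (hxt.trans hyt.symm) hne'
  -- replacement vertex when v lies in a branch set
  have hz : ∀ w₀ : W, f v' = some w₀ →
      ∃ z : {x : V | x ≠ a.1}, z ≠ v' ∧ f z = some w₀ ∧ G.Adj v z.1 := by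
    intro w₀ hw₀
    by_cases hex : ∃ x : {x : V | x ≠ a.1}, x ≠ v' ∧ f x = some w₀
    · obtain ⟨x₀, hx₀ne, hx₀⟩ := hex
      have hne : (⟨v', hw₀⟩ : {p : {x : V | x ≠ a.1} | f p = some w₀}) ≠ ⟨x₀, hx₀⟩ :=
        fun e => hx₀ne (Subtype.mk_eq_mk.mp e).symm
      obtain ⟨b, hb⟩ := exists_adj_of_connected (hconn w₀) hne
      have hbadj : G.Adj v b.1.1 := hb
      exact ⟨b.1, fun e => hbadj.ne' (congrArg Subtype.val e), b.2, hbadj⟩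
    · exfalso
      obtain ⟨w₁, w₂, w₃, h12, h13, h23, ha1, ha2, ha3⟩ := hdeg w₀
      have huniq : ∀ x : {x : V | x ≠ a.1}, f x = some w₀ → x = v' := by
        intro x hx
        by_contra hne
        exact hex ⟨x, hne, hx⟩
      have key2 : ∀ wi, K.Adj w₀ wi →
          ∃ q : {x : V | x ≠ a.1}, f q = some wi ∧ (q.1 = u ∨ q.1 = t) := by
        intro wi hai
        obtain ⟨p, q, hp, hq, hpq⟩ := hadj _ _ hai
        have hpv : p = v' := huniq p hp
        have hGadj : G.Adj p.1 q.1 := hpq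
        rw [hpv] at hGadj
        exact ⟨q, hq, hnbr _ hGadj⟩
      obtain ⟨q₁, hq₁, hq₁'⟩ := key2 w₁ ha1
      obtain ⟨q₂, hq₂, hq₂'⟩ := key2 w₂ ha2
      obtain ⟨q₃, hq₃, hq₃'⟩ := key2 w₃ ha3
      have hne12 : q₁.1 ≠ q₂.1 := fun e => h12 (Option.some.inj (hq₁ ▸ hq₂ ▸ congrArg f (Subtype.ext e)))
      have hne13 : q₁.1 ≠ q₃.1 := fun e => h13 (Option.some.inj (hq₁ ▸ hq₃ ▸ congrArg f (Subtype.ext e)))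
      have hne23 : q₂.1 ≠ q₃.1 := fun e => h23 (Option.some.inj (hq₂ ▸ hq₃ ▸ congrArg f (Subtype.ext e)))
      rcases hq₁' with e1 | e1 <;> rcases hq₂' with e2 | e2 <;> rcases hq₃' with e3 | e3 <;>
        first
        | exact hne12 (e1.trans e2.symm)
        | exact hne13 (e1.trans e3.symm)
        | exact hne23 (e2.trans e3.symm)
  cases hfv : f v' with
  | none =>
    have hxv : ∀ (x : {x : V | x ≠ a.1}) (w : W), f x = some w → x.1 ≠ v := by
      intro x w hx e
      have hx' : x = v' := Subtype.ext e
      rw [hx', hfv] at hx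
      cases hx
    refine ⟨g, ?_, ?_, ?_⟩
    · intro w
      obtain ⟨x, hx⟩ := hsurj w
      exact ⟨bLift a x (hxv x w hx), by rw [hglift]; exact hx⟩
    · intro w
      refine connected_transfer
        (A := (G.induce {x : V | x ≠ a.1}).induce {p | f p = some w})
        (fun p => ⟨bLift a p.1 (hxv p.1 w p.2), by simp only [Set.mem_setOf_eq]; rw [hglift]; exact p.2⟩) ?_ ?_ (hconn w)
      · rintro ⟨y, hy⟩
        exact ⟨⟨bProj a y, hy⟩, Subtype.ext (Subtype.ext (Subtype.ext rfl))⟩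
      · intro p q hpq
        exact Or.inl (hlift_adj _ _ _ _ (Or.inl hpq))
    · intro w₁ w₂ hw
      obtain ⟨p, q, hp, hq, hpq⟩ := hadj _ _ hw
      exact ⟨bLift a p (hxv p w₁ hp), bLift a q (hxv q w₂ hq),
        by rw [hglift]; exact hp, by rw [hglift]; exact hq, hlift_adj _ _ _ _ (Or.inl hpq)⟩
  | some w₀ =>
    obtain ⟨z, hzne, hzf, hzadj⟩ := hz w₀ hfv
    have hzv : z.1 ≠ v := fun e => hzne (Subtype.ext e)
    have hzut : z.1 = u ∨ z.1 = t := hnbr _ hzadj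
    have hwz : ∀ (x : {x : V | x ≠ a.1}) (w : W), f x = some w → x.1 = v → w = w₀ := by
      intro x w hx e
      have hx' : x = v' := Subtype.ext e
      rw [hx', hfv] at hx
      exact (Option.some.inj hx).symm
    refine ⟨g, ?_, ?_, ?_⟩
    · intro w
      obtain ⟨x, hx⟩ := hsurj w
      by_cases hxv : x.1 = v
      · refine ⟨bLift a z hzv, ?_⟩
        rw [hglift, hzf, hwz x w hx hxv]
      · exact ⟨bLift a x hxv, by rw [hglift]; exact hx⟩
    · intro w
      refine connected_transfer
        (A := (G.induce {x : V | x ≠ a.1}).induce {p | f p = some w})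
        (fun p => if h : p.1.1 = v then
            ⟨bLift a z hzv, by
              simp only [Set.mem_setOf_eq]; rw [hglift, hzf, hwz p.1 w p.2 h]⟩
          else ⟨bLift a p.1 h, by simp only [Set.mem_setOf_eq]; rw [hglift]; exact p.2⟩) ?_ ?_ (hconn w)
      · rintro ⟨y, hy⟩
        refine ⟨⟨bProj a y, hy⟩, ?_⟩
        have hne' : (bProj a y).1 ≠ v := y.1.2
        simp only [dif_neg hne']
        exact Subtype.ext (Subtype.ext (Subtype.ext rfl))
      · intro p q hpq
        have hG : G.Adj p.1.1 q.1.1 := hpq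
        by_cases hp : p.1.1 = v <;> by_cases hq : q.1.1 = v
        · exfalso; rw [hp, hq] at hG; exact G.irrefl hG
        · simp only [dif_pos hp, dif_neg hq]
          have hqut : q.1.1 = u ∨ q.1.1 = t := hnbr _ (by have h' := hG; rw [hp] at h'; exact h')
          by_cases hzq : z.1 = q.1.1
          · exact Or.inr (Subtype.ext (Subtype.ext (Subtype.ext hzq)))
          · exact Or.inl (hlift_adj _ _ _ _ (Or.inr ⟨hzut, hqut, hzq⟩))
        · simp only [dif_neg hp, dif_pos hq]
          have hput : p.1.1 = u ∨ p.1.1 = t := hnbr _ (by have h' := hG.symm; rw [hq] at h'; exact h')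
          by_cases hzp : p.1.1 = z.1
          · exact Or.inr (Subtype.ext (Subtype.ext (Subtype.ext hzp)))
          · exact Or.inl (hlift_adj _ _ _ _ (Or.inr ⟨hput, hzut, hzp⟩))
        · simp only [dif_neg hp, dif_neg hq]
          exact Or.inl (hlift_adj _ _ _ _ (Or.inl hG))
    · intro w₁ w₂ hw
      obtain ⟨p, q, hp, hq, hpq⟩ := hadj _ _ hw
      have hG : G.Adj p.1 q.1 := hpq
      have hww : w₁ ≠ w₂ := hw.ne
      by_cases hpv : p.1 = v <;> by_cases hqv : q.1 = v
      · exfalso; rw [hpv, hqv] at hG; exact G.irrefl hG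
      · -- replace p by z ; w₁ = w₀
        have hw₁ : w₁ = w₀ := hwz p w₁ hp hpv
        have hqut : q.1 = u ∨ q.1 = t := hnbr _ (by have h' := hG; rw [hpv] at h'; exact h')
        have hzq : z.1 ≠ q.1 := by
          intro e
          have : f z = f q := congrArg f (Subtype.ext e)
          rw [hzf, hq] at this
          exact hww (hw₁.trans (Option.some.inj this))
        exact ⟨bLift a z hzv, bLift a q hqv,
          by rw [hglift, hzf, hw₁], by rw [hglift]; exact hq,
          hlift_adj _ _ _ _ (Or.inr ⟨hzut, hqut, hzq⟩)⟩
      · have hw₂ : w₂ = w₀ := hwz q w₂ hq hqv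
        have hput : p.1 = u ∨ p.1 = t := hnbr _ (by have h' := hG.symm; rw [hqv] at h'; exact h')
        have hpz : p.1 ≠ z.1 := by
          intro e
          have : f p = f z := congrArg f (Subtype.ext e)
          rw [hzf, hp] at this
          exact hww ((Option.some.inj this).trans hw₂.symm)
        exact ⟨bLift a p hpv, bLift a z hzv,
          by rw [hglift]; exact hp, by rw [hglift, hzf, hw₂],
          hlift_adj _ _ _ _ (Or.inr ⟨hput, hzut, hpz⟩)⟩
      · exact ⟨bLift a p hpv, bLift a q hqv,
          by rw [hglift]; exact hp, by rw [hglift]; exact hq,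
          hlift_adj _ _ _ _ (Or.inl hG)⟩

lemma deg5 : ∀ w : Fin 5, ∃ w₁ w₂ w₃ : Fin 5, w₁ ≠ w₂ ∧ w₁ ≠ w₃ ∧ w₂ ≠ w₃ ∧
    (completeGraph (Fin 5)).Adj w w₁ ∧ (completeGraph (Fin 5)).Adj w w₂ ∧
    (completeGraph (Fin 5)).Adj w w₃ := by
  simp only [completeGraph, top_adj]
  decide

lemma deg33 : ∀ w : Fin 3 ⊕ Fin 3, ∃ w₁ w₂ w₃, w₁ ≠ w₂ ∧ w₁ ≠ w₃ ∧ w₂ ≠ w₃ ∧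
    (completeBipartiteGraph (Fin 3) (Fin 3)).Adj w w₁ ∧
    (completeBipartiteGraph (Fin 3) (Fin 3)).Adj w w₂ ∧
    (completeBipartiteGraph (Fin 3) (Fin 3)).Adj w w₃ := by
  simp only [completeBipartiteGraph]
  decide

/-- If `G` is non-apex and `v` has degree 2, then contracting one of the two
edges incident to `v` yields a non-apex graph. -/
theorem stmt_4 {V : Type} [Fintype V] (G : SimpleGraph V) (hG : ¬ IsApex G)
    (v : V) (hv : vdeg G v = 2) (u : V) (huv : G.Adj u v) :
    ¬ IsApex (contractEdge G u v) := by
  intro hapex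
  obtain ⟨a, h5, h33⟩ := hapex
  apply hG
  have hv' : (G.neighborSet v).ncard = 2 := hv
  obtain ⟨x, y, hxy, hset⟩ := Set.ncard_eq_two.mp hv'
  have hu : u ∈ G.neighborSet v := huv.symm
  have hvu : G.Adj v u := huv.symm
  rw [hset] at hu
  simp only [Set.mem_insert_iff, Set.mem_singleton_iff] at hu
  have hT : ∃ t', u ≠ t' ∧ G.Adj v t' ∧ ∀ p, G.Adj v p → p = u ∨ p = t' := by
    rcases hu with rfl | rfl
    · refine ⟨y, hxy, ?_, ?_⟩
      · have : y ∈ G.neighborSet v := by rw [hset]; exact Set.mem_insert_of_mem _ rfl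
        exact this
      · intro p hp
        have : p ∈ G.neighborSet v := hp
        rw [hset] at this
        simpa using this
    · refine ⟨x, hxy.symm, ?_, ?_⟩
      · have : x ∈ G.neighborSet v := by rw [hset]; exact Set.mem_insert _ _
        exact this
      · intro p hp
        have : p ∈ G.neighborSet v := hp
        rw [hset] at this
        simp only [Set.mem_insert_iff, Set.mem_singleton_iff] at this
        exact this.symm
  obtain ⟨t', hut', hvt', hnbr'⟩ := hT
  exact ⟨a.1, fun hm => h5 (key _ deg5 G u v t' hut' hvu hvt' hnbr' a hm),
    fun hm => h33 (key _ deg33 G u v t' hut' hvu hvt' hnbr' a hm)⟩
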